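/- Let E be a real inner product space and φ: E → ℝ a differentiable strictly convex function with Bregman divergence d_φ. Fix β < 1 and let f be the log-sum-exp generator f(z) = (exp((β − 1)z) − 1)/(β − 1), so f'(z) = exp((β − 1)z). Let x_1, …, x_n ∈ E, θ ∈ E, w_i = exp((β − 1) d_φ(x_i, θ)), and θ̃ = (Σ_i w_i x_i)/(Σ_j w_j). Then Σ_{i=1}^n f(d_φ(x_i, θ̃)) ≤ Σ_{i=1}^n f(d_φ(x_i, θ)). -/

import Mathlib

open scoped RealInnerProductSpace

/-- The Bregman divergence `d_φ(x, θ) = φ(x) − φ(θ) − ⟨x − θ, ∇φ(θ)⟩`. -/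
noncomputable def bregman {E : Type*} [NormedAddCommGroup E] [InnerProductSpace ℝ E]
    [CompleteSpace E] (φ : E → ℝ) (x θ : E) : ℝ :=
  φ x - φ θ - ⟪x - θ, gradient φ θ⟫

lemma bregman_nonneg {E : Type*} [NormedAddCommGroup E] [InnerProductSpace ℝ E]
    [CompleteSpace E] (φ : E → ℝ) (hφdiff : Differentiable ℝ φ)
    (hφconv : StrictConvexOn ℝ Set.univ φ) (x θ : E) :
    0 ≤ bregman φ x θ := by
  have hconv : ConvexOn ℝ Set.univ φ := hφconv.convexOn
  set v : E := x - θ with hv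
  -- the line t ↦ θ + t • v
  set c : ℝ → E := fun t => θ + t • v with hc
  have hcd : HasDerivAt c v 0 := by
    have : HasDerivAt (fun t : ℝ => t • v) ((1 : ℝ) • v) 0 := (hasDerivAt_id 0).smul_const v
    simpa [hc] using this.const_add θ
  have hgrad : HasFDerivAt φ (InnerProductSpace.toDual ℝ E (gradient φ θ)) θ :=
    hasGradientAt_iff_hasFDerivAt.mp (hφdiff θ).hasGradientAt
  have hc0 : c 0 = θ := by simp [hc]
  have hgd : HasDerivAt (φ ∘ c) ⟪gradient φ θ, v⟫ 0 := by
    have := HasFDerivAt.comp_hasDerivAt (0:ℝ) (hc0 ▸ hgrad) hcd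
    simpa [InnerProductSpace.toDual_apply_apply, hc0] using this
  -- convexity of φ ∘ c on ℝ
  have hgc : ConvexOn ℝ Set.univ (φ ∘ c) := by
    have h2 : ConvexOn ℝ Set.univ (φ ∘ (AffineMap.lineMap θ x : ℝ →ᵃ[ℝ] E)) := by
      have := hconv.comp_affineMap (AffineMap.lineMap θ x : ℝ →ᵃ[ℝ] E)
      simpa using this
    have hce : c = ⇑(AffineMap.lineMap θ x : ℝ →ᵃ[ℝ] E) := by
      funext t
      simp only [hc, AffineMap.lineMap_apply, hv, vsub_eq_sub, vadd_eq_add, smul_sub]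
      abel
    rw [hce]; exact h2
  have hslope : ⟪gradient φ θ, v⟫ ≤ slope (φ ∘ c) 0 1 :=
    hgc.le_slope_of_hasDerivAt (Set.mem_univ 0) (Set.mem_univ 1) one_pos hgd
  have h0 : (φ ∘ c) 0 = φ θ := by simp [hc]
  have h1 : (φ ∘ c) 1 = φ x := by simp [hc, hv]
  rw [slope_def_field, h0, h1] at hslope
  norm_num at hslope
  rw [hgrad.fderiv, InnerProductSpace.toDual_apply_apply] at hslope
  simp only [bregman]
  rw [real_inner_comm]
  linarith [hslope]

/-- Taylor/tangent inequality for `f`: concavity step. -/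
lemma f_tangent_le (β : ℝ) (hβ : β < 1) (a b : ℝ) :
    (Real.exp ((β - 1) * a) - 1) / (β - 1) ≤
      (Real.exp ((β - 1) * b) - 1) / (β - 1) + Real.exp ((β - 1) * b) * (a - b) := by
  have hc : β - 1 < 0 := by linarith
  have h1 : (β - 1) * (a - b) + 1 ≤ Real.exp ((β - 1) * (a - b)) :=
    Real.add_one_le_exp _
  have h2 : Real.exp ((β - 1) * b) * ((β - 1) * (a - b) + 1) ≤ Real.exp ((β - 1) * a) := by
    calc Real.exp ((β - 1) * b) * ((β - 1) * (a - b) + 1)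
        ≤ Real.exp ((β - 1) * b) * Real.exp ((β - 1) * (a - b)) := by
          exact mul_le_mul_of_nonneg_left h1 (Real.exp_pos _).le
      _ = Real.exp ((β - 1) * a) := by rw [← Real.exp_add]; ring_nf
  rw [div_add' _ _ _ hc.ne, div_le_div_right_of_neg hc]
  nlinarith [h2]

/-- For the log-sum-exp generator `f(z) = (exp((β−1)z) − 1)/(β−1)` with `β < 1`,
the weighted-mean update with weights `w_i = exp((β−1) d_φ(x_i, θ))` does not
increase the objective. -/
theorem log_sum_exp_update_decreases_objective
    {E : Type*} [NormedAddCommGroup E] [InnerProductSpace ℝ E] [CompleteSpace E]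
    (φ : E → ℝ) (hφdiff : Differentiable ℝ φ)
    (hφconv : StrictConvexOn ℝ Set.univ φ)
    (β : ℝ) (hβ : β < 1)
    (f : ℝ → ℝ)
    (hf : ∀ z : ℝ, f z = (Real.exp ((β - 1) * z) - 1) / (β - 1))
    (n : ℕ) (x : Fin n → E) (θ : E)
    (w : Fin n → ℝ)
    (hw : ∀ i, w i = Real.exp ((β - 1) * bregman φ (x i) θ))
    (θnew : E) (hθnew : θnew = (∑ i, w i)⁻¹ • ∑ i, w i • x i) :
    ∑ i, f (bregman φ (x i) θnew) ≤ ∑ i, f (bregman φ (x i) θ) := by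
  have hkey : (∑ i, w i) • θnew = ∑ i, w i • x i := by
    rcases Nat.eq_zero_or_pos n with h0 | hpos
    · subst h0; simp
    · have hSpos : 0 < ∑ i, w i := by
        apply Finset.sum_pos
        · intro i _; rw [hw i]; exact Real.exp_pos _
        · exact Finset.univ_nonempty_iff.mpr (Fin.pos_iff_nonempty.mp hpos)
      rw [hθnew, smul_smul, mul_inv_cancel₀ hSpos.ne', one_smul]
  have hwsum : ∑ i, w i * bregman φ (x i) θnew ≤ ∑ i, w i * bregman φ (x i) θ := by
    have hid : ∑ i, w i * bregman φ (x i) θ - ∑ i, w i * bregman φ (x i) θnew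
        = (∑ i, w i) * bregman φ θnew θ := by
      rw [← Finset.sum_sub_distrib]
      have hterm : ∀ i : Fin n, w i * bregman φ (x i) θ - w i * bregman φ (x i) θnew
          = w i * (φ θnew - φ θ) - ⟪w i • (x i - θ), gradient φ θ⟫
            + ⟪w i • (x i - θnew), gradient φ θnew⟫ := by
        intro i
        simp only [bregman, real_inner_smul_left]
        ring
      simp_rw [hterm]
      rw [Finset.sum_add_distrib, Finset.sum_sub_distrib, ← sum_inner, ← sum_inner,
        ← Finset.sum_mul]
      have e1 : ∑ i, w i • (x i - θ) = (∑ i, w i) • (θnew - θ) := by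
        have h : ∑ i, w i • (x i - θ) = (∑ i, w i • x i) - (∑ i, w i) • θ := by
          simp [smul_sub, Finset.sum_sub_distrib, Finset.sum_smul]
        rw [h, ← hkey, ← smul_sub]
      have e2 : ∑ i, w i • (x i - θnew) = 0 := by
        have h : ∑ i, w i • (x i - θnew) = (∑ i, w i • x i) - (∑ i, w i) • θnew := by
          simp [smul_sub, Finset.sum_sub_distrib, Finset.sum_smul]
        rw [h, ← hkey, sub_self]
      rw [e1, e2, inner_zero_left, real_inner_smul_left]
      simp only [bregman]
      ring
    have hnn : 0 ≤ (∑ i, w i) * bregman φ θnew θ := by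
      apply mul_nonneg
      · exact Finset.sum_nonneg fun i _ => by rw [hw i]; exact (Real.exp_pos _).le
      · exact bregman_nonneg φ hφdiff hφconv _ _
    linarith
  have hconc : ∀ i : Fin n, f (bregman φ (x i) θnew)
      ≤ f (bregman φ (x i) θ) + w i * (bregman φ (x i) θnew - bregman φ (x i) θ) := by
    intro i
    rw [hf, hf, hw]
    exact f_tangent_le β hβ _ _
  calc ∑ i, f (bregman φ (x i) θnew)
      ≤ ∑ i, (f (bregman φ (x i) θ) + w i * (bregman φ (x i) θnew - bregman φ (x i) θ)) :=
        Finset.sum_le_sum fun i _ => hconc i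
    _ = ∑ i, f (bregman φ (x i) θ)
        + (∑ i, w i * bregman φ (x i) θnew - ∑ i, w i * bregman φ (x i) θ) := by
        rw [Finset.sum_add_distrib]
        simp [mul_sub, Finset.sum_sub_distrib]
    _ ≤ ∑ i, f (bregman φ (x i) θ) := by linarith
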